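/- Let T be a set of (k+1)-element subsets of [n] with |T| = m3 and det ∂̂_{•,T} ≠ 0 (a ℚ-acyclic complex). Then det(∂̂_{•,T})² ≤ ((k+1)/n)^{m1} · (k+1)^{m2}; in particular |H̃_{k−1}(T)|² ≤ ((k+1)/n)^{m1}(k+1)^{m2}, improving Kalai's bound (k+1)^{m2}. -/

import Mathlib

open Matrix

/-- The `j`-element subsets of the vertex set `[n]` (modelled as `Fin n`). -/
abbrev Face (n j : ℕ) := {s : Finset (Fin n) // s.card = j}

/-- The `j`-element subsets of `[n]` not containing the last vertex `n`
(the vertex of `Fin n` with value `n - 1`). -/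
abbrev HFace (n j : ℕ) :=
  {s : Finset (Fin n) // s.card = j ∧ ∀ a ∈ s, (a : ℕ) < n - 1}

/-- The `k`-dimensional boundary matrix `∂`: rows indexed by `k`-subsets `σ`,
columns by `(k+1)`-subsets `τ`; the entry is `(-1)^m` if `σ = τ \ {τ_m}`
(where `τ = {τ_0 < ⋯ < τ_k}`), and `0` otherwise. -/
noncomputable def bdry (n k : ℕ) : Matrix (Face n k) (Face n (k+1)) ℝ :=
  fun σ τ => ∑ a ∈ τ.1,
    if σ.1 = τ.1.erase a then (-1 : ℝ) ^ ((τ.1.filter (fun b => b < a)).card) else 0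

/-- The submatrix `∂̂` of `∂` consisting of the rows indexed by `k`-subsets
not containing the vertex `n`. -/
noncomputable def bdryHat (n k : ℕ) : Matrix (HFace n k) (Face n (k+1)) ℝ :=
  fun σ τ => bdry n k ⟨σ.1, σ.2.1⟩ τ

/-- The submatrix `M_{•,T}` of `M` with columns restricted to `T`. -/
def colSub {ι κ : Type*} (M : Matrix ι κ ℝ) (T : Finset κ) :
    Matrix ι {τ // τ ∈ T} ℝ :=
  fun i t => M i t.1

/- The squared determinant of a matrix whose row and column index types are in
bijection (`0` if there is no bijection); independent of the chosen bijection. -/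
open scoped Classical in
noncomputable def detSq {ι κ : Type*} [Fintype ι] [DecidableEq ι] [Fintype κ]
    (M : Matrix ι κ ℝ) : ℝ :=
  if h : Nonempty (ι ≃ κ) then ((M.submatrix id h.some).det) ^ 2 else 0

/-- The degree `d_i(T)`: the number of members of `T` containing the vertex `i`. -/
def deg (n k : ℕ) (T : Finset (Face n (k+1))) (i : Fin n) : ℕ :=
  (T.filter (fun τ => i ∈ τ.1)).card

/-- The diagonal matrix `X_j` indexed by `j`-subsets, with entries `∏_{i∈σ} x_i`. -/
noncomputable def Xdiag (n j : ℕ) (x : Fin n → ℝ) :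
    Matrix (Face n j) (Face n j) ℝ :=
  Matrix.diagonal (fun σ => ∏ i ∈ σ.1, x i)

namespace SUB

variable {n : ℕ}

noncomputable def sgn (s : Finset (Fin n)) (a : Fin n) : ℝ :=
  (-1 : ℝ) ^ ((s.filter (fun b => b < a)).card)

lemma sgn_mul_self (s : Finset (Fin n)) (a : Fin n) : sgn s a * sgn s a = 1 := by
  rw [sgn, ← pow_add]
  exact Even.neg_one_pow ⟨_, rfl⟩

lemma bdry_apply {j : ℕ} (σ : Face n j) (τ : Face n (j+1)) (a : Fin n)
    (ha : a ∈ τ.1) (h : σ.1 = τ.1.erase a) : bdry n j σ τ = sgn τ.1 a := by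
  rw [bdry, Finset.sum_eq_single_of_mem a ha]
  · rw [if_pos h]; rfl
  · intro b hb hba
    rw [if_neg]
    intro hc
    exact hba ((Finset.erase_inj τ.1 hb).mp (hc.symm.trans h))

lemma bdry_eq_zero {j : ℕ} {σ : Face n j} {τ : Face n (j+1)} (h : ¬ σ.1 ⊆ τ.1) :
    bdry n j σ τ = 0 := by
  rw [bdry]
  refine Finset.sum_eq_zero fun a _ => if_neg fun hc => h ?_
  rw [hc]; exact Finset.erase_subset _ _

lemma subset_of_bdry_ne_zero {j : ℕ} {σ : Face n j} {τ : Face n (j+1)}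
    (h : bdry n j σ τ ≠ 0) : σ.1 ⊆ τ.1 := by
  by_contra hc; exact h (bdry_eq_zero hc)

lemma exists_erase {j : ℕ} (σ : Face n j) (τ : Face n (j+1)) (h : σ.1 ⊆ τ.1) :
    ∃ a ∈ τ.1, a ∉ σ.1 ∧ σ.1 = τ.1.erase a := by
  have hcard : (τ.1 \ σ.1).card = 1 := by
    rw [Finset.card_sdiff_of_subset h, σ.2, τ.2]; simp
  obtain ⟨a, ha⟩ := Finset.card_eq_one.mp hcard
  have haτ := Finset.mem_sdiff.mp (ha ▸ Finset.mem_singleton_self a)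
  refine ⟨a, haτ.1, haτ.2, ?_⟩
  refine (Finset.eq_of_subset_of_card_le ?_ ?_).symm
  · intro b hb
    rcases Finset.mem_erase.mp hb with ⟨hb1, hb2⟩
    by_contra hbσ
    have : b ∈ τ.1 \ σ.1 := Finset.mem_sdiff.mpr ⟨hb2, hbσ⟩
    rw [ha, Finset.mem_singleton] at this
    exact hb1 this
  · rw [Finset.card_erase_of_mem haτ.1, σ.2, τ.2]; omega

lemma bdry_mul_self {j : ℕ} (σ : Face n j) (τ : Face n (j+1)) :
    bdry n j σ τ * bdry n j σ τ = if σ.1 ⊆ τ.1 then 1 else 0 := by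
  by_cases h : σ.1 ⊆ τ.1
  · obtain ⟨a, ha, -, he⟩ := exists_erase σ τ h
    rw [bdry_apply σ τ a ha he, if_pos h, sgn_mul_self]
  · rw [bdry_eq_zero h, if_neg h, mul_zero]

lemma key_sign_lt {ρ : Finset (Fin n)} {x y : Fin n} (hx : x ∉ ρ) (hy : y ∉ ρ) (hxy : x < y) :
    sgn (insert x (insert y ρ)) y * sgn (insert x ρ) x
      = -(sgn (insert x (insert y ρ)) x * sgn (insert y ρ) y) := by
  have c1 : ((insert x (insert y ρ)).filter (fun b => b < y)).card
      = ((ρ.filter (fun b => b < y)).card) + 1 := by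
    rw [Finset.filter_insert, if_pos hxy, Finset.filter_insert, if_neg (lt_irrefl y),
      Finset.card_insert_of_notMem (by simp [hx])]
  have c2 : ((insert x (insert y ρ)).filter (fun b => b < x)).card
      = (ρ.filter (fun b => b < x)).card := by
    rw [Finset.filter_insert, if_neg (lt_irrefl x), Finset.filter_insert,
      if_neg (not_lt.mpr hxy.le)]
  have c3 : ((insert x ρ).filter (fun b => b < x)).card = (ρ.filter (fun b => b < x)).card := by
    rw [Finset.filter_insert, if_neg (lt_irrefl x)]
  have c4 : ((insert y ρ).filter (fun b => b < y)).card = (ρ.filter (fun b => b < y)).card := by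
    rw [Finset.filter_insert, if_neg (lt_irrefl y)]
  rw [sgn, sgn, sgn, sgn, c1, c2, c3, c4, pow_succ]
  ring

lemma key_sign {ρ : Finset (Fin n)} {x y : Fin n} (hx : x ∉ ρ) (hy : y ∉ ρ) (hxy : x ≠ y) :
    sgn (insert x (insert y ρ)) y * sgn (insert x ρ) x
      = -(sgn (insert x (insert y ρ)) x * sgn (insert y ρ) y) := by
  rcases lt_or_gt_of_ne hxy with h | h
  · exact key_sign_lt hx hy h
  · have := key_sign_lt hy hx h
    rw [Finset.insert_comm] at this
    linarith [this]


lemma card_lt_filter (m : ℕ) (hm : m ≤ n) :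
    ((Finset.univ : Finset (Fin n)).filter (fun a : Fin n => (a:ℕ) < m)).card = m := by
  have : (Finset.univ : Finset (Fin m)).map (Fin.castLEEmb hm)
      = (Finset.univ : Finset (Fin n)).filter (fun a : Fin n => (a:ℕ) < m) := by
    ext a
    simp only [Finset.mem_map, Finset.mem_univ, true_and, Finset.mem_filter]
    constructor
    · rintro ⟨b, rfl⟩; simpa using b.2
    · intro hb; exact ⟨⟨(a:ℕ), hb⟩, rfl⟩
  rw [← this, Finset.card_map, Finset.card_univ, Fintype.card_fin]

lemma card_up {j m : ℕ} (hm : m ≤ n) (σ : Face n j) (hσ : ∀ a ∈ σ.1, (a:ℕ) < m) :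
    (Finset.univ.filter
        (fun τ : Face n (j+1) => (∀ a ∈ τ.1, (a:ℕ) < m) ∧ σ.1 ⊆ τ.1)).card = m - j := by
  have key : (Finset.univ.filter (fun a : Fin n => (a:ℕ) < m ∧ a ∉ σ.1)).card = m - j := by
    have he : Finset.univ.filter (fun a : Fin n => (a:ℕ) < m ∧ a ∉ σ.1)
        = (Finset.univ.filter (fun a : Fin n => (a:ℕ) < m)) \ σ.1 := by
      ext a
      simp only [Finset.mem_filter, Finset.mem_univ, true_and, Finset.mem_sdiff]
    rw [he, Finset.card_sdiff_of_subset (fun a ha => Finset.mem_filter.mpr ⟨Finset.mem_univ a, hσ a ha⟩)]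
    rw [card_lt_filter m hm, σ.2]
  rw [← key]
  refine (Finset.card_bij
    (fun (a : Fin n) (ha : a ∈ Finset.univ.filter (fun a : Fin n => (a:ℕ) < m ∧ a ∉ σ.1)) =>
      (⟨insert a σ.1, by
        have h2 : a ∉ σ.1 := (Finset.mem_filter.mp ha).2.2
        rw [Finset.card_insert_of_notMem h2, σ.2]⟩ : Face n (j+1)))
    ?_ ?_ ?_).symm
  · intro a ha
    rcases Finset.mem_filter.mp ha with ⟨-, h1, h2⟩
    refine Finset.mem_filter.mpr ⟨Finset.mem_univ _, fun b hb => ?_, Finset.subset_insert _ _⟩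
    rcases Finset.mem_insert.mp hb with rfl | hb
    · exact h1
    · exact hσ b hb
  · intro a ha b hb hab
    have hval : insert a σ.1 = insert b σ.1 := congrArg Subtype.val hab
    have : a ∈ insert b σ.1 := by
      rw [← hval]; exact Finset.mem_insert_self _ _
    rcases Finset.mem_insert.mp this with h | h
    · exact h
    · exact absurd h (Finset.mem_filter.mp ha).2.2
  · intro τ hτ
    rcases Finset.mem_filter.mp hτ with ⟨-, hbd, hsub⟩
    obtain ⟨a, haτ, haσ, he⟩ := exists_erase σ τ hsub
    refine ⟨a, Finset.mem_filter.mpr ⟨Finset.mem_univ _, hbd a haτ, haσ⟩, ?_⟩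
    apply Subtype.ext
    show insert a σ.1 = τ.1
    rw [he, Finset.insert_erase haτ]

lemma sum_sq_up {j : ℕ} (m : ℕ) (hm : m ≤ n) (σ : Face n j) (hσ : ∀ a ∈ σ.1, (a:ℕ) < m) :
    ∑ τ : Face n (j+1), (if ∀ a ∈ τ.1, (a:ℕ) < m then (1:ℝ) else 0)
        * (bdry n j σ τ * bdry n j σ τ) = ((m - j : ℕ) : ℝ) := by
  have h1 : ∀ τ : Face n (j+1), (if ∀ a ∈ τ.1, (a:ℕ) < m then (1:ℝ) else 0)
      * (bdry n j σ τ * bdry n j σ τ)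
      = if (∀ a ∈ τ.1, (a:ℕ) < m) ∧ σ.1 ⊆ τ.1 then 1 else 0 := by
    intro τ
    rw [bdry_mul_self]
    by_cases h1 : ∀ a ∈ τ.1, (a:ℕ) < m <;> by_cases h2 : σ.1 ⊆ τ.1 <;>
      simp [h1, h2]
  rw [Finset.sum_congr rfl (fun τ _ => h1 τ), Finset.sum_boole, card_up hm σ hσ]

lemma sum_sq_down {j : ℕ} (σ : Face n (j+1)) :
    ∑ ρ : Face n j, bdry n j ρ σ * bdry n j ρ σ = ((j+1 : ℕ) : ℝ) := by
  have hc : (Finset.univ.filter (fun ρ : Face n j => ρ.1 ⊆ σ.1)).card = j+1 := by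
    conv_rhs => rw [← σ.2]
    refine (Finset.card_bij
      (fun (a : Fin n) (ha : a ∈ σ.1) =>
        (⟨σ.1.erase a, by rw [Finset.card_erase_of_mem ha, σ.2]; omega⟩ : Face n j))
      ?_ ?_ ?_).symm
    · intro a ha
      exact Finset.mem_filter.mpr ⟨Finset.mem_univ _, Finset.erase_subset _ _⟩
    · intro a ha b hb hab
      exact (Finset.erase_inj σ.1 ha).mp (Subtype.ext_iff.mp hab)
    · intro ρ hρ
      obtain ⟨a, haσ, haρ, he⟩ := exists_erase ρ σ (Finset.mem_filter.mp hρ).2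
      exact ⟨a, haσ, (Subtype.ext he.symm : _)⟩
  rw [Finset.sum_congr rfl (fun ρ _ => bdry_mul_self ρ σ), Finset.sum_boole, hc]

lemma master {j m : ℕ} (hm : m ≤ n) (σ σ' : Face n (j+1))
    (hσ : ∀ a ∈ σ.1, (a:ℕ) < m) (hσ' : ∀ a ∈ σ'.1, (a:ℕ) < m) :
    (∑ τ : Face n (j+2), (if ∀ a ∈ τ.1, (a:ℕ) < m then (1:ℝ) else 0)
        * (bdry n (j+1) σ τ * bdry n (j+1) σ' τ))
      + ∑ ρ : Face n j, bdry n j ρ σ * bdry n j ρ σ' = if σ = σ' then (m:ℝ) else 0 := by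
  by_cases hss : σ = σ'
  · subst hss
    rw [if_pos rfl, sum_sq_up m hm σ hσ, sum_sq_down σ]
    have hj : j + 1 ≤ m := by
      have hsub : σ.1 ⊆ Finset.univ.filter (fun a : Fin n => (a:ℕ) < m) :=
        fun a ha => Finset.mem_filter.mpr ⟨Finset.mem_univ a, hσ a ha⟩
      have := Finset.card_le_card hsub
      rwa [σ.2, card_lt_filter m hm] at this
    norm_cast
    omega
  · rw [if_neg hss]
    have hne : σ.1 ≠ σ'.1 := fun h => hss (Subtype.ext h)
    have hcaple : (σ.1 ∩ σ'.1).card ≤ j := by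
      by_contra hlt
      push_neg at hlt
      have h1 : (σ.1 ∩ σ'.1).card ≤ j + 1 := by
        have hss2 : σ.1 ∩ σ'.1 ⊆ σ.1 := Finset.inter_subset_left
        have := Finset.card_le_card hss2
        rw [σ.2] at this
        exact this
      have h2 : (σ.1 ∩ σ'.1).card = j + 1 := le_antisymm h1 hlt
      have h3 : σ.1 ∩ σ'.1 = σ.1 :=
        Finset.eq_of_subset_of_card_le Finset.inter_subset_left (by rw [h2, σ.2])
      have h4 : σ.1 ⊆ σ'.1 := by rw [← h3]; exact Finset.inter_subset_right
      exact hne (Finset.eq_of_subset_of_card_le h4 (by rw [σ.2, σ'.2]))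
    by_cases hcap : (σ.1 ∩ σ'.1).card = j
    · -- main case
      have hcup : (σ.1 ∪ σ'.1).card = j + 2 := by
        have := Finset.card_union_add_card_inter σ.1 σ'.1
        rw [σ.2, σ'.2, hcap] at this
        omega
      have hx1 : (σ.1 \ σ'.1).card = 1 := by
        have := Finset.card_sdiff_add_card_inter σ.1 σ'.1
        rw [σ.2, hcap] at this; omega
      have hy1 : (σ'.1 \ σ.1).card = 1 := by
        have := Finset.card_sdiff_add_card_inter σ'.1 σ.1
        rw [σ'.2, Finset.inter_comm, hcap] at this; omega
      obtain ⟨x, hxe⟩ := Finset.card_eq_one.mp hx1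
      obtain ⟨y, hye⟩ := Finset.card_eq_one.mp hy1
      have hxσ := Finset.mem_sdiff.mp (hxe ▸ Finset.mem_singleton_self x)
      have hyσ := Finset.mem_sdiff.mp (hye ▸ Finset.mem_singleton_self y)
      have hxy : x ≠ y := fun h => hxσ.2 (h ▸ hyσ.1)
      have hσx : σ.1 = insert x (σ.1 ∩ σ'.1) := by
        ext a
        simp only [Finset.mem_insert, Finset.mem_inter]
        constructor
        · intro ha
          by_cases h' : a ∈ σ'.1
          · exact Or.inr ⟨ha, h'⟩
          · left
            have : a ∈ σ.1 \ σ'.1 := Finset.mem_sdiff.mpr ⟨ha, h'⟩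
            rw [hxe, Finset.mem_singleton] at this; exact this
        · rintro (rfl | ⟨h, -⟩)
          · exact hxσ.1
          · exact h
      have hσ'y : σ'.1 = insert y (σ.1 ∩ σ'.1) := by
        ext a
        simp only [Finset.mem_insert, Finset.mem_inter]
        constructor
        · intro ha
          by_cases h' : a ∈ σ.1
          · exact Or.inr ⟨h', ha⟩
          · left
            have : a ∈ σ'.1 \ σ.1 := Finset.mem_sdiff.mpr ⟨ha, h'⟩
            rw [hye, Finset.mem_singleton] at this; exact this
        · rintro (rfl | ⟨-, h⟩)
          · exact hyσ.1
          · exact h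
      have hxρ : x ∉ σ.1 ∩ σ'.1 := fun h => hxσ.2 (Finset.mem_inter.mp h).2
      have hyρ : y ∉ σ.1 ∩ σ'.1 := fun h => hyσ.2 (Finset.mem_inter.mp h).1
      have hcupins : σ.1 ∪ σ'.1 = insert x (insert y (σ.1 ∩ σ'.1)) := by
        ext a
        simp only [Finset.mem_union, Finset.mem_insert, Finset.mem_inter]
        constructor
        · intro ha
          by_cases h1 : a ∈ σ.1 <;> by_cases h2 : a ∈ σ'.1
          · exact Or.inr (Or.inr ⟨h1, h2⟩)
          · have hmem : a ∈ σ.1 \ σ'.1 := Finset.mem_sdiff.mpr ⟨h1, h2⟩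
            rw [hxe, Finset.mem_singleton] at hmem
            exact Or.inl hmem
          · have hmem : a ∈ σ'.1 \ σ.1 := Finset.mem_sdiff.mpr ⟨h2, h1⟩
            rw [hye, Finset.mem_singleton] at hmem
            exact Or.inr (Or.inl hmem)
          · rcases ha with hh | hh
            · exact absurd hh h1
            · exact absurd hh h2
        · rintro (rfl | rfl | ⟨hh, -⟩)
          · exact Or.inl hxσ.1
          · exact Or.inr hyσ.1
          · exact Or.inl hh
      set ρ0 := σ.1 ∩ σ'.1 with hρ0def
      have hτcard : (σ.1 ∪ σ'.1).card = j + 2 := hcup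
      set τ0 : Face n (j+2) := ⟨σ.1 ∪ σ'.1, hτcard⟩ with hτ0def
      set ρf : Face n j := ⟨ρ0, hcap⟩ with hρfdef
      have hup : (∑ τ : Face n (j+2), (if ∀ a ∈ τ.1, (a:ℕ) < m then (1:ℝ) else 0)
          * (bdry n (j+1) σ τ * bdry n (j+1) σ' τ))
          = bdry n (j+1) σ τ0 * bdry n (j+1) σ' τ0 := by
        rw [Finset.sum_eq_single τ0]
        · rw [if_pos, one_mul]
          intro a ha
          rcases Finset.mem_union.mp ha with h | h
          · exact hσ a h
          · exact hσ' a h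
        · intro τ _ hτne
          rcases eq_or_ne (bdry n (j+1) σ τ) 0 with h0 | h0
          · rw [h0]; ring
          rcases eq_or_ne (bdry n (j+1) σ' τ) 0 with h0' | h0'
          · rw [h0']; ring
          exfalso
          apply hτne
          have hsub : σ.1 ∪ σ'.1 ⊆ τ.1 :=
            Finset.union_subset (subset_of_bdry_ne_zero h0) (subset_of_bdry_ne_zero h0')
          exact Subtype.ext ((Finset.eq_of_subset_of_card_le hsub (by rw [τ.2, hτcard])).symm)
        · intro h; exact absurd (Finset.mem_univ τ0) h
      have hdown : (∑ ρ : Face n j, bdry n j ρ σ * bdry n j ρ σ')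
          = bdry n j ρf σ * bdry n j ρf σ' := by
        rw [Finset.sum_eq_single ρf]
        · intro ρ _ hρne
          rcases eq_or_ne (bdry n j ρ σ) 0 with h0 | h0
          · rw [h0]; ring
          rcases eq_or_ne (bdry n j ρ σ') 0 with h0' | h0'
          · rw [h0']; ring
          exfalso
          apply hρne
          have hsub : ρ.1 ⊆ ρ0 :=
            Finset.subset_inter (subset_of_bdry_ne_zero h0) (subset_of_bdry_ne_zero h0')
          exact Subtype.ext (Finset.eq_of_subset_of_card_le hsub (by rw [ρ.2, hcap]))
        · intro h; exact absurd (Finset.mem_univ ρf) h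
      have e1 : bdry n (j+1) σ τ0 = sgn τ0.1 y := by
        apply bdry_apply σ τ0 y
        · show y ∈ σ.1 ∪ σ'.1
          exact Finset.mem_union_right _ hyσ.1
        · show σ.1 = (σ.1 ∪ σ'.1).erase y
          rw [hcupins, Finset.erase_insert_of_ne hxy, Finset.erase_insert hyρ, hσx]
      have e2 : bdry n (j+1) σ' τ0 = sgn τ0.1 x := by
        apply bdry_apply σ' τ0 x
        · exact Finset.mem_union_left _ hxσ.1
        · show σ'.1 = (σ.1 ∪ σ'.1).erase x
          rw [hcupins, Finset.erase_insert, hσ'y]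
          simp only [Finset.mem_insert]
          push_neg
          exact ⟨hxy, hxρ⟩
      have e3 : bdry n j ρf σ = sgn σ.1 x := by
        apply bdry_apply ρf σ x hxσ.1
        show ρ0 = σ.1.erase x
        rw [hσx, Finset.erase_insert hxρ]
      have e4 : bdry n j ρf σ' = sgn σ'.1 y := by
        apply bdry_apply ρf σ' y hyσ.1
        show ρ0 = σ'.1.erase y
        rw [hσ'y, Finset.erase_insert hyρ]
      rw [hup, hdown, e1, e2, e3, e4]
      have hτval : τ0.1 = insert x (insert y ρ0) := hcupins
      rw [hτval, hσx, hσ'y]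
      have key := key_sign hxρ hyρ hxy
      have hB := sgn_mul_self (insert x (insert y ρ0)) x
      have hC := sgn_mul_self (insert x ρ0) x
      set A := sgn (insert x (insert y ρ0)) y
      set B := sgn (insert x (insert y ρ0)) x
      set C := sgn (insert x ρ0) x
      set D := sgn (insert y ρ0) y
      linear_combination (B*C) * key - (A*B) * hC - (C*D) * hB
    · -- degenerate case : intersection too small, everything vanishes
      have hlt : (σ.1 ∩ σ'.1).card < j := lt_of_le_of_ne hcaple hcap
      have hup : (∑ τ : Face n (j+2), (if ∀ a ∈ τ.1, (a:ℕ) < m then (1:ℝ) else 0)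
          * (bdry n (j+1) σ τ * bdry n (j+1) σ' τ)) = 0 := by
        refine Finset.sum_eq_zero fun τ _ => ?_
        rcases eq_or_ne (bdry n (j+1) σ τ) 0 with h0 | h0
        · rw [h0]; ring
        rcases eq_or_ne (bdry n (j+1) σ' τ) 0 with h0' | h0'
        · rw [h0']; ring
        exfalso
        have hsub : σ.1 ∪ σ'.1 ⊆ τ.1 :=
          Finset.union_subset (subset_of_bdry_ne_zero h0) (subset_of_bdry_ne_zero h0')
        have h5 := Finset.card_le_card hsub
        have h6 := Finset.card_union_add_card_inter σ.1 σ'.1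
        rw [σ.2, σ'.2] at h6
        rw [τ.2] at h5
        omega
      have hdown : (∑ ρ : Face n j, bdry n j ρ σ * bdry n j ρ σ') = 0 := by
        refine Finset.sum_eq_zero fun ρ _ => ?_
        rcases eq_or_ne (bdry n j ρ σ) 0 with h0 | h0
        · rw [h0]; ring
        rcases eq_or_ne (bdry n j ρ σ') 0 with h0' | h0'
        · rw [h0']; ring
        exfalso
        have hsub : ρ.1 ⊆ σ.1 ∩ σ'.1 :=
          Finset.subset_inter (subset_of_bdry_ne_zero h0) (subset_of_bdry_ne_zero h0')
        have h5 := Finset.card_le_card hsub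
        rw [ρ.2] at h5
        omega
      rw [hup, hdown, add_zero]

lemma master0 {m : ℕ} (hm : m ≤ n) (σ σ' : Face n 0) :
    (∑ τ : Face n 1, (if ∀ a ∈ τ.1, (a:ℕ) < m then (1:ℝ) else 0)
        * (bdry n 0 σ τ * bdry n 0 σ' τ)) = if σ = σ' then (m:ℝ) else 0 := by
  have h : σ = σ' := Subtype.ext (by
    rw [Finset.card_eq_zero.mp σ.2, Finset.card_eq_zero.mp σ'.2])
  subst h
  rw [if_pos rfl]
  have hemp : σ.1 = ∅ := Finset.card_eq_zero.mp σ.2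
  have := sum_sq_up (j := 0) m hm σ (by rw [hemp]; intro a ha; exact absurd ha (Finset.notMem_empty a))
  simpa using this

lemma comp (j : ℕ) : bdry n j * bdry n (j+1) = 0 := by
  ext ρ u
  show (∑ σ : Face n (j+1), bdry n j ρ σ * bdry n (j+1) σ u) = 0
  by_cases h : ρ.1 ⊆ u.1
  · have hcard2 : (u.1 \ ρ.1).card = 2 := by
      rw [Finset.card_sdiff_of_subset h, ρ.2, u.2]; omega
    obtain ⟨x, y, hxy, hxye⟩ := Finset.card_eq_two.mp hcard2
    have hxm := Finset.mem_sdiff.mp (by rw [hxye]; exact Finset.mem_insert_self x {y} : x ∈ u.1 \ ρ.1)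
    have hym := Finset.mem_sdiff.mp (by rw [hxye]; simp : y ∈ u.1 \ ρ.1)
    have hu : u.1 = insert x (insert y ρ.1) := by
      ext a
      simp only [Finset.mem_insert]
      constructor
      · intro ha
        by_cases h' : a ∈ ρ.1
        · exact Or.inr (Or.inr h')
        · have : a ∈ u.1 \ ρ.1 := Finset.mem_sdiff.mpr ⟨ha, h'⟩
          rw [hxye] at this
          rcases (by simpa using this : a = x ∨ a = y) with h'' | h''
          · exact Or.inl h''
          · exact Or.inr (Or.inl h'')
      · rintro (rfl | rfl | ha)
        · exact hxm.1
        · exact hym.1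
        · exact h ha
    have hσ1card : (insert x ρ.1).card = j + 1 := by
      rw [Finset.card_insert_of_notMem hxm.2, ρ.2]
    have hσ2card : (insert y ρ.1).card = j + 1 := by
      rw [Finset.card_insert_of_notMem hym.2, ρ.2]
    set σ1 : Face n (j+1) := ⟨insert x ρ.1, hσ1card⟩ with hσ1def
    set σ2 : Face n (j+1) := ⟨insert y ρ.1, hσ2card⟩ with hσ2def
    have hσ12 : σ1 ≠ σ2 := by
      intro hc
      have : x ∈ insert y ρ.1 := by
        rw [← show σ1.1 = insert y ρ.1 from congrArg Subtype.val hc]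
        exact Finset.mem_insert_self _ _
      rcases Finset.mem_insert.mp this with h' | h'
      · exact hxy h'
      · exact hxm.2 h'
    have hzero : ∀ σ : Face n (j+1), σ ≠ σ1 → σ ≠ σ2 →
        bdry n j ρ σ * bdry n (j+1) σ u = 0 := by
      intro σ h1 h2
      rcases eq_or_ne (bdry n j ρ σ) 0 with h0 | h0
      · rw [h0]; ring
      rcases eq_or_ne (bdry n (j+1) σ u) 0 with h0' | h0'
      · rw [h0']; ring
      exfalso
      obtain ⟨a, haσ, haρ, hae⟩ := exists_erase ρ σ (subset_of_bdry_ne_zero h0)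
      have hau : a ∈ u.1 \ ρ.1 := Finset.mem_sdiff.mpr
        ⟨subset_of_bdry_ne_zero h0' haσ, haρ⟩
      have hσval : σ.1 = insert a ρ.1 := by
        rw [hae]
        exact (Finset.insert_erase haσ).symm
      rw [hxye] at hau
      rcases Finset.mem_insert.mp hau with rfl | h'
      · exact h1 (Subtype.ext (by rw [hσval]))
      · rw [Finset.mem_singleton] at h'
        subst h'
        exact h2 (Subtype.ext (by rw [hσval]))
    have hsum : (∑ σ : Face n (j+1), bdry n j ρ σ * bdry n (j+1) σ u)
        = ∑ σ ∈ ({σ1, σ2} : Finset (Face n (j+1))), bdry n j ρ σ * bdry n (j+1) σ u := by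
      refine (Finset.sum_subset (Finset.subset_univ _) ?_).symm
      intro σ _ hσ
      simp only [Finset.mem_insert, Finset.mem_singleton] at hσ
      push_neg at hσ
      exact hzero σ hσ.1 hσ.2
    rw [hsum, Finset.sum_pair hσ12]
    have e1 : bdry n j ρ σ1 = sgn σ1.1 x := by
      apply bdry_apply ρ σ1 x (Finset.mem_insert_self _ _)
      show ρ.1 = (insert x ρ.1).erase x
      rw [Finset.erase_insert hxm.2]
    have e2 : bdry n (j+1) σ1 u = sgn u.1 y := by
      apply bdry_apply σ1 u y hym.1
      show σ1.1 = u.1.erase y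
      rw [hu, Finset.erase_insert_of_ne hxy, Finset.erase_insert hym.2]
    have e3 : bdry n j ρ σ2 = sgn σ2.1 y := by
      apply bdry_apply ρ σ2 y (Finset.mem_insert_self _ _)
      show ρ.1 = (insert y ρ.1).erase y
      rw [Finset.erase_insert hym.2]
    have e4 : bdry n (j+1) σ2 u = sgn u.1 x := by
      apply bdry_apply σ2 u x hxm.1
      show σ2.1 = u.1.erase x
      rw [hu, Finset.erase_insert]
      simp only [Finset.mem_insert]
      push_neg
      exact ⟨hxy, hxm.2⟩
    rw [e1, e2, e3, e4, hu]
    have key := key_sign hxm.2 hym.2 hxy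
    show sgn σ1.1 x * sgn (insert x (insert y ρ.1)) y
        + sgn σ2.1 y * sgn (insert x (insert y ρ.1)) x = 0
    rw [hσ1def, hσ2def]
    linear_combination key
  · refine Finset.sum_eq_zero fun σ _ => ?_
    rcases eq_or_ne (bdry n j ρ σ) 0 with h0 | h0
    · rw [h0]; ring
    rcases eq_or_ne (bdry n (j+1) σ u) 0 with h0' | h0'
    · rw [h0']; ring
    exact absurd ((subset_of_bdry_ne_zero h0).trans (subset_of_bdry_ne_zero h0')) h

lemma up_down (j : ℕ) : bdry n (j+1) * (bdry n (j+1))ᵀ + (bdry n j)ᵀ * bdry n j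
    = (n:ℝ) • (1 : Matrix (Face n (j+1)) (Face n (j+1)) ℝ) := by
  ext σ σ'
  show (∑ τ : Face n (j+2), bdry n (j+1) σ τ * bdry n (j+1) σ' τ)
      + (∑ ρ : Face n j, bdry n j ρ σ * bdry n j ρ σ')
      = (n:ℝ) • (1 : Matrix (Face n (j+1)) (Face n (j+1)) ℝ) σ σ'
  have := master (le_refl n) σ σ' (fun a _ => a.2) (fun a _ => a.2)
  simp only [Fin.is_lt, imp_self, implies_true, if_true, one_mul] at this
  rw [this]
  by_cases h : σ = σ' <;> simp [h, Matrix.one_apply]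

noncomputable def Rm (n j : ℕ) : Matrix (HFace n j) (Face n j) ℝ :=
  fun s σ => if σ = ⟨s.1, s.2.1⟩ then 1 else 0

lemma Rm_mul_apply {α : Type*} [Fintype α] {j : ℕ} (X : Matrix (Face n j) α ℝ)
    (s : HFace n j) (a : α) : (Rm n j * X) s a = X ⟨s.1, s.2.1⟩ a := by
  rw [Matrix.mul_apply, Finset.sum_eq_single (⟨s.1, s.2.1⟩ : Face n j)]
  · simp [Rm]
  · intro σ _ hne; simp [Rm, hne]
  · intro h; exact absurd (Finset.mem_univ _) h

lemma mul_Rmt_apply {α : Type*} [Fintype α] {j : ℕ} (X : Matrix α (Face n j) ℝ)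
    (a : α) (s : HFace n j) : (X * (Rm n j)ᵀ) a s = X a ⟨s.1, s.2.1⟩ := by
  rw [Matrix.mul_apply, Finset.sum_eq_single (⟨s.1, s.2.1⟩ : Face n j)]
  · simp [Rm, Matrix.transpose_apply]
  · intro σ _ hne; simp [Rm, Matrix.transpose_apply, hne]
  · intro h; exact absurd (Finset.mem_univ _) h

lemma Rm_mul_Rmt (j : ℕ) : Rm n j * (Rm n j)ᵀ = 1 := by
  ext s s'
  rw [mul_Rmt_apply]
  show (if (⟨s'.1, s'.2.1⟩ : Face n j) = ⟨s.1, s.2.1⟩ then (1:ℝ) else 0)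
      = (1 : Matrix (HFace n j) (HFace n j) ℝ) s s'
  by_cases h : s = s'
  · subst h; simp [Matrix.one_apply]
  · have h2 : (⟨s'.1, s'.2.1⟩ : Face n j) ≠ ⟨s.1, s.2.1⟩ := by
      intro hc
      exact h (Subtype.ext (congrArg Subtype.val hc).symm)
  
    simp [Matrix.one_apply, h, h2]

lemma bdryHat_eq (j : ℕ) : bdryHat n j = Rm n j * bdry n j := by
  ext s τ
  rw [Rm_mul_apply]
  rfl

lemma sum_hface {j : ℕ} (f : Face n j → ℝ) :
    ∑ s : HFace n j, f ⟨s.1, s.2.1⟩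
      = ∑ σ : Face n j, (if ∀ a ∈ σ.1, (a:ℕ) < n - 1 then (1:ℝ) else 0) * f σ := by
  have h1 : ∀ σ : Face n j, (if ∀ a ∈ σ.1, (a:ℕ) < n-1 then (1:ℝ) else 0) * f σ
      = if (∀ a ∈ σ.1, (a:ℕ) < n-1) then f σ else 0 := by
    intro σ; split <;> simp
  rw [Finset.sum_congr rfl fun σ _ => h1 σ, ← Finset.sum_filter]
  rw [Finset.sum_subtype (p := fun σ : Face n j => ∀ a ∈ σ.1, (a:ℕ) < n-1)
    (Finset.univ.filter (fun σ : Face n j => ∀ a ∈ σ.1, (a:ℕ) < n-1))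
    (by intro x; simp) f]
  exact Fintype.sum_equiv
    ⟨fun s => ⟨⟨s.1, s.2.1⟩, s.2.2⟩, fun x => ⟨x.1.1, x.1.2, x.2⟩,
      fun s => rfl, fun x => rfl⟩ _ _ (fun s => rfl)

lemma Msq_core {k' : ℕ} (down : Face n k' → Face n k' → ℝ)
    (HInner : ∀ ρ ρ' : Face n k', (∀ a ∈ ρ.1, (a:ℕ) < n-1) → (∀ a ∈ ρ'.1, (a:ℕ) < n-1) →
      (∑ σ' : Face n (k'+1), (if ∀ a ∈ σ'.1, (a:ℕ) < n-1 then (1:ℝ) else 0)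
        * (bdry n k' ρ σ' * bdry n k' ρ' σ')) + down ρ ρ'
        = (if ρ = ρ' then ((n:ℝ)-1) else 0))
    (Hdown : ∀ s s'' : HFace n (k'+1),
      (∑ ρ : Face n k', ∑ ρ' : Face n k',
        (bdry n k' ρ ⟨s.1, s.2.1⟩ * bdry n k' ρ' ⟨s''.1, s''.2.1⟩) * down ρ ρ') = 0) :
    (Rm n (k'+1) * ((bdry n k')ᵀ * bdry n k') * (Rm n (k'+1))ᵀ)
      * (Rm n (k'+1) * ((bdry n k')ᵀ * bdry n k') * (Rm n (k'+1))ᵀ)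
    = ((n:ℝ) - 1) • (Rm n (k'+1) * ((bdry n k')ᵀ * bdry n k') * (Rm n (k'+1))ᵀ) := by
  set D := (bdry n k')ᵀ * bdry n k' with hD
  have hDapp : ∀ α β : Face n (k'+1), D α β
      = ∑ ρ : Face n k', bdry n k' ρ α * bdry n k' ρ β := by
    intro α β
    rw [hD, Matrix.mul_apply]
    simp [Matrix.transpose_apply]
  have hRDR : ∀ s s' : HFace n (k'+1),
      (Rm n (k'+1) * D * (Rm n (k'+1))ᵀ) s s' = D ⟨s.1, s.2.1⟩ ⟨s'.1, s'.2.1⟩ := by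
    intro s s'
    rw [mul_Rmt_apply, Rm_mul_apply]
  ext s s''
  rw [Matrix.mul_apply, Matrix.smul_apply, hRDR, smul_eq_mul]
  calc
    ∑ s' : HFace n (k'+1),
        (Rm n (k'+1) * D * (Rm n (k'+1))ᵀ) s s' * (Rm n (k'+1) * D * (Rm n (k'+1))ᵀ) s' s''
      = ∑ s' : HFace n (k'+1),
          D ⟨s.1, s.2.1⟩ ⟨s'.1, s'.2.1⟩ * D ⟨s'.1, s'.2.1⟩ ⟨s''.1, s''.2.1⟩ := by
        refine Finset.sum_congr rfl fun s' _ => ?_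
        rw [hRDR, hRDR]
    _ = ∑ σ' : Face n (k'+1), (if ∀ a ∈ σ'.1, (a:ℕ) < n - 1 then (1:ℝ) else 0)
          * (D ⟨s.1, s.2.1⟩ σ' * D σ' ⟨s''.1, s''.2.1⟩) :=
        sum_hface (fun σ' => D ⟨s.1, s.2.1⟩ σ' * D σ' ⟨s''.1, s''.2.1⟩)
    _ = ∑ σ' : Face n (k'+1), ∑ ρ : Face n k', ∑ ρ' : Face n k',
          (bdry n k' ρ ⟨s.1, s.2.1⟩ * bdry n k' ρ' ⟨s''.1, s''.2.1⟩)
            * ((if ∀ a ∈ σ'.1, (a:ℕ) < n - 1 then (1:ℝ) else 0)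
              * (bdry n k' ρ σ' * bdry n k' ρ' σ')) := by
        refine Finset.sum_congr rfl fun σ' _ => ?_
        rw [hDapp, hDapp, Finset.sum_mul_sum]
        simp only [Finset.mul_sum]
        refine Finset.sum_congr rfl fun ρ _ => Finset.sum_congr rfl fun ρ' _ => ?_
        ring
    _ = ∑ ρ : Face n k', ∑ ρ' : Face n k', ∑ σ' : Face n (k'+1),
          (bdry n k' ρ ⟨s.1, s.2.1⟩ * bdry n k' ρ' ⟨s''.1, s''.2.1⟩)
            * ((if ∀ a ∈ σ'.1, (a:ℕ) < n - 1 then (1:ℝ) else 0)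
              * (bdry n k' ρ σ' * bdry n k' ρ' σ')) := by
        rw [Finset.sum_comm]
        exact Finset.sum_congr rfl fun ρ _ => Finset.sum_comm
    _ = ∑ ρ : Face n k', ∑ ρ' : Face n k',
          (bdry n k' ρ ⟨s.1, s.2.1⟩ * bdry n k' ρ' ⟨s''.1, s''.2.1⟩)
            * (∑ σ' : Face n (k'+1), (if ∀ a ∈ σ'.1, (a:ℕ) < n - 1 then (1:ℝ) else 0)
              * (bdry n k' ρ σ' * bdry n k' ρ' σ')) := by
        refine Finset.sum_congr rfl fun ρ _ => Finset.sum_congr rfl fun ρ' _ => ?_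
        rw [Finset.mul_sum]
    _ = ∑ ρ : Face n k', ∑ ρ' : Face n k',
          (bdry n k' ρ ⟨s.1, s.2.1⟩ * bdry n k' ρ' ⟨s''.1, s''.2.1⟩)
            * ((if ρ = ρ' then ((n:ℝ)-1) else 0) - down ρ ρ') := by
        refine Finset.sum_congr rfl fun ρ _ => Finset.sum_congr rfl fun ρ' _ => ?_
        rcases eq_or_ne (bdry n k' ρ ⟨s.1, s.2.1⟩) 0 with h0 | h0
        · rw [h0]; ring
        rcases eq_or_ne (bdry n k' ρ' ⟨s''.1, s''.2.1⟩) 0 with h0' | h0'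
        · rw [h0']; ring
        have hρ : ∀ a ∈ ρ.1, (a:ℕ) < n-1 :=
          fun a ha => s.2.2 a (subset_of_bdry_ne_zero h0 ha)
        have hρ' : ∀ a ∈ ρ'.1, (a:ℕ) < n-1 :=
          fun a ha => s''.2.2 a (subset_of_bdry_ne_zero h0' ha)
        rw [eq_sub_of_add_eq (HInner ρ ρ' hρ hρ')]
    _ = ((n:ℝ)-1) * D ⟨s.1, s.2.1⟩ ⟨s''.1, s''.2.1⟩ := by
        have hsplit : ∀ ρ ρ' : Face n k',
            (bdry n k' ρ ⟨s.1, s.2.1⟩ * bdry n k' ρ' ⟨s''.1, s''.2.1⟩)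
              * ((if ρ = ρ' then ((n:ℝ)-1) else 0) - down ρ ρ')
            = (if ρ = ρ' then (bdry n k' ρ ⟨s.1, s.2.1⟩ * bdry n k' ρ' ⟨s''.1, s''.2.1⟩)
                  * ((n:ℝ)-1) else 0)
              - (bdry n k' ρ ⟨s.1, s.2.1⟩ * bdry n k' ρ' ⟨s''.1, s''.2.1⟩) * down ρ ρ' := by
          intro ρ ρ'
          split <;> ring
        simp only [hsplit, Finset.sum_sub_distrib]
        rw [Hdown s s'', sub_zero]
        have hdiag : ∀ ρ : Face n k',
            (∑ ρ' : Face n k', if ρ = ρ' then (bdry n k' ρ ⟨s.1, s.2.1⟩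
              * bdry n k' ρ' ⟨s''.1, s''.2.1⟩) * ((n:ℝ)-1) else 0)
            = (bdry n k' ρ ⟨s.1, s.2.1⟩ * bdry n k' ρ ⟨s''.1, s''.2.1⟩) * ((n:ℝ)-1) := by
          intro ρ
          rw [Finset.sum_ite_eq]
          simp
        rw [Finset.sum_congr rfl fun ρ _ => hdiag ρ, hDapp, Finset.mul_sum]
        exact Finset.sum_congr rfl fun ρ _ => by ring

lemma Msq (k' : ℕ) (hn2 : 2 ≤ n) :
    (Rm n (k'+1) * ((bdry n k')ᵀ * bdry n k') * (Rm n (k'+1))ᵀ)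
      * (Rm n (k'+1) * ((bdry n k')ᵀ * bdry n k') * (Rm n (k'+1))ᵀ)
    = ((n:ℝ) - 1) • (Rm n (k'+1) * ((bdry n k')ᵀ * bdry n k') * (Rm n (k'+1))ᵀ) := by
  have hm : n - 1 ≤ n := Nat.sub_le n 1
  have hc : ((n-1:ℕ) : ℝ) = (n:ℝ) - 1 := by
    have h1 : (1:ℕ) ≤ n := by omega
    rw [Nat.cast_sub h1, Nat.cast_one]
  cases k' with
  | zero =>
      refine Msq_core (fun _ _ => 0) ?_ ?_
      · intro ρ ρ' hρ hρ'
        rw [add_zero, master0 hm ρ ρ', hc]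
      · intro s s''; simp
  | succ k'' =>
      refine Msq_core
        (fun ρ ρ' => ∑ π : Face n k'', bdry n k'' π ρ * bdry n k'' π ρ') ?_ ?_
      · intro ρ ρ' hρ hρ'
        rw [master hm ρ ρ' hρ hρ', hc]
      · intro s s''
        have hentry : ∀ (π : Face n k'') (α : Face n (k''+1+1)),
            (∑ ρ : Face n (k''+1), bdry n k'' π ρ * bdry n (k''+1) ρ α) = 0 := by
          intro π α
          have h0 := congrFun (congrFun (comp (n := n) k'') π) α
          simpa [Matrix.mul_apply] using h0
        calc
          ∑ ρ : Face n (k''+1), ∑ ρ' : Face n (k''+1),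
              (bdry n (k''+1) ρ ⟨s.1, s.2.1⟩ * bdry n (k''+1) ρ' ⟨s''.1, s''.2.1⟩)
                * (∑ π : Face n k'', bdry n k'' π ρ * bdry n k'' π ρ')
            = ∑ ρ : Face n (k''+1), ∑ ρ' : Face n (k''+1), ∑ π : Face n k'',
              (bdry n k'' π ρ * bdry n (k''+1) ρ ⟨s.1, s.2.1⟩)
                * (bdry n k'' π ρ' * bdry n (k''+1) ρ' ⟨s''.1, s''.2.1⟩) := by
              refine Finset.sum_congr rfl fun ρ _ => Finset.sum_congr rfl fun ρ' _ => ?_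
              rw [Finset.mul_sum]
              exact Finset.sum_congr rfl fun π _ => by ring
          _ = ∑ ρ : Face n (k''+1), ∑ π : Face n k'', ∑ ρ' : Face n (k''+1),
              (bdry n k'' π ρ * bdry n (k''+1) ρ ⟨s.1, s.2.1⟩)
                * (bdry n k'' π ρ' * bdry n (k''+1) ρ' ⟨s''.1, s''.2.1⟩) :=
              Finset.sum_congr rfl fun ρ _ => Finset.sum_comm
          _ = ∑ π : Face n k'', ∑ ρ : Face n (k''+1), ∑ ρ' : Face n (k''+1),
              (bdry n k'' π ρ * bdry n (k''+1) ρ ⟨s.1, s.2.1⟩)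
                * (bdry n k'' π ρ' * bdry n (k''+1) ρ' ⟨s''.1, s''.2.1⟩) :=
              Finset.sum_comm
          _ = ∑ π : Face n k'',
              (∑ ρ : Face n (k''+1), bdry n k'' π ρ * bdry n (k''+1) ρ ⟨s.1, s.2.1⟩)
                * (∑ ρ' : Face n (k''+1),
                    bdry n k'' π ρ' * bdry n (k''+1) ρ' ⟨s''.1, s''.2.1⟩) := by
              refine Finset.sum_congr rfl fun π _ => ?_
              rw [Finset.sum_mul_sum]
          _ = 0 := by
              refine Finset.sum_eq_zero fun π _ => ?_
              rw [hentry π ⟨s.1, s.2.1⟩, zero_mul]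

lemma card_face (j : ℕ) : Fintype.card (Face n j) = n.choose j := by
  simpa using Fintype.card_finset_len (α := Fin n) j

def hfaceEquiv (n j : ℕ) : HFace n j ≃ {s : Finset (Fin (n-1)) // s.card = j} where
  toFun s := ⟨(s.1.attach).map ⟨fun a => (⟨((a.1 : Fin n) : ℕ), s.2.2 a.1 a.2⟩ : Fin (n-1)),
      fun a b hab => Subtype.ext (Fin.ext (by simpa using hab))⟩,
    by rw [Finset.card_map, Finset.card_attach, s.2.1]⟩
  invFun t := ⟨t.1.map ⟨fun (b : Fin (n-1)) =>
        (⟨(b : ℕ), lt_of_lt_of_le b.2 (Nat.sub_le n 1)⟩ : Fin n),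
      fun a b hab => Fin.ext (by simpa using hab)⟩,
    by rw [Finset.card_map]; exact t.2,
    by
      intro a ha
      rcases Finset.mem_map.mp ha with ⟨b, -, rfl⟩
      exact b.2⟩
  left_inv s := by
    apply Subtype.ext
    ext a
    constructor
    · intro ha
      rcases Finset.mem_map.mp ha with ⟨b, hb, rfl⟩
      rcases Finset.mem_map.mp hb with ⟨c, -, rfl⟩
      exact c.2
    · intro ha
      refine Finset.mem_map.mpr ⟨⟨(a : ℕ), s.2.2 a ha⟩, ?_, ?_⟩
      · exact Finset.mem_map.mpr ⟨⟨a, ha⟩, Finset.mem_attach _ _, rfl⟩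
      · exact Fin.ext rfl
  right_inv t := by
    apply Subtype.ext
    ext a
    constructor
    · intro ha
      rcases Finset.mem_map.mp ha with ⟨c, -, rfl⟩
      have hc1 := c.2
      rcases Finset.mem_map.mp hc1 with ⟨d, hd, hde⟩
      have : ((c.1 : Fin n) : ℕ) = (d : ℕ) := by rw [← hde]; rfl
      simp only [Function.Embedding.coeFn_mk]
      have he : ∀ (h : ((c.1 : Fin n) : ℕ) < n - 1),
          (⟨((c.1 : Fin n) : ℕ), h⟩ : Fin (n-1)) = d := fun h => Fin.ext this
      convert hd using 1
      exact Fin.ext this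
    · intro ha
      have hmem : (⟨(a : ℕ), lt_of_lt_of_le a.2 (Nat.sub_le n 1)⟩ : Fin n)
          ∈ t.1.map ⟨fun (b : Fin (n-1)) =>
            (⟨(b : ℕ), lt_of_lt_of_le b.2 (Nat.sub_le n 1)⟩ : Fin n),
          fun a b hab => Fin.ext (by simpa using hab)⟩ :=
        Finset.mem_map.mpr ⟨a, ha, rfl⟩
      refine Finset.mem_map.mpr ⟨⟨_, hmem⟩, Finset.mem_attach _ _, ?_⟩
      exact Fin.ext rfl

lemma card_hface (j : ℕ) : Fintype.card (HFace n j) = (n-1).choose j := by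
  rw [Fintype.card_congr (hfaceEquiv n j)]
  simpa using Fintype.card_finset_len (α := Fin (n-1)) j

lemma choose_id1 (N j : ℕ) (hN : 1 ≤ N) : (N - j) * N.choose j = N * (N-1).choose j := by
  have h2 := Nat.add_one_mul_choose_eq (N-1) j
  rw [Nat.sub_add_cancel hN] at h2
  rw [h2, Nat.choose_succ_right_eq, mul_comm]

lemma choose_id2 (N j : ℕ) (hN : 1 ≤ N) : N.choose (j+1) * (j+1) = N * (N-1).choose j := by
  have h2 := Nat.add_one_mul_choose_eq (N-1) j
  rw [Nat.sub_add_cancel hN] at h2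
  exact h2.symm

lemma trace_eq_sum_eigenvalues {m : Type*} [Fintype m] [DecidableEq m]
    {A : Matrix m m ℝ} (hA : A.IsHermitian) :
    A.trace = ∑ i, hA.eigenvalues i := by
  have hU1 : star (hA.eigenvectorUnitary : Matrix m m ℝ)
      * (hA.eigenvectorUnitary : Matrix m m ℝ) = 1 := by
    simpa using unitary.coe_star_mul_self hA.eigenvectorUnitary
  nth_rewrite 1 [hA.spectral_theorem]
  rw [Unitary.conjStarAlgAut_apply, Matrix.trace_mul_comm, ← Matrix.mul_assoc, hU1, Matrix.one_mul, Matrix.trace_diagonal]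
  simp [RCLike.ofReal_real_eq_id]

lemma eigenvalues_zero_or {m : Type*} [Fintype m] [DecidableEq m]
    {A : Matrix m m ℝ} (hA : A.IsHermitian) {c : ℝ} (hAA : A * A = c • A) (i : m) :
    hA.eigenvalues i = 0 ∨ hA.eigenvalues i = c := by
  have hv := hA.mulVec_eigenvectorBasis i
  have h2 : (A * A) *ᵥ ⇑(hA.eigenvectorBasis i)
      = (hA.eigenvalues i * hA.eigenvalues i) • ⇑(hA.eigenvectorBasis i) := by
    rw [← Matrix.mulVec_mulVec, hv, Matrix.mulVec_smul, hv, smul_smul]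
  rw [hAA, Matrix.smul_mulVec, hv, smul_smul] at h2
  have hvne : ⇑(hA.eigenvectorBasis i) ≠ 0 := by
    have hne := hA.eigenvectorBasis.orthonormal.ne_zero i
    intro hc0
    exact hne (by ext j; exact congrFun hc0 j)
  have h4 : (hA.eigenvalues i * hA.eigenvalues i - c * hA.eigenvalues i)
      • ⇑(hA.eigenvectorBasis i) = 0 := by
    rw [sub_smul, h2, sub_self]
  rcases smul_eq_zero.mp h4 with h5 | h5
  · have h6 : hA.eigenvalues i * (hA.eigenvalues i - c) = 0 := by ring_nf; ring_nf at h5; linarith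
    rcases mul_eq_zero.mp h6 with h7 | h7
    · exact Or.inl h7
    · exact Or.inr (by linarith [sub_eq_zero.mp h7])
  · exact absurd h5 hvne

lemma det_smul_one_sub {m : Type*} [Fintype m] [DecidableEq m]
    {A : Matrix m m ℝ} (hA : A.IsHermitian) (a : ℝ) :
    Matrix.det (a • (1 : Matrix m m ℝ) - A) = ∏ i, (a - hA.eigenvalues i) := by
  have hU1 : (hA.eigenvectorUnitary : Matrix m m ℝ)
      * star (hA.eigenvectorUnitary : Matrix m m ℝ) = 1 := by
    simpa using unitary.coe_mul_star_self hA.eigenvectorUnitary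
  have h1 : (hA.eigenvectorUnitary : Matrix m m ℝ) * (a • 1)
      * star (hA.eigenvectorUnitary : Matrix m m ℝ) = a • (1 : Matrix m m ℝ) := by
    rw [Matrix.mul_smul, Matrix.mul_one, Matrix.smul_mul, hU1]
  have key : a • (1 : Matrix m m ℝ) - A
      = (hA.eigenvectorUnitary : Matrix m m ℝ)
        * (a • 1 - Matrix.diagonal (RCLike.ofReal ∘ hA.eigenvalues))
        * star (hA.eigenvectorUnitary : Matrix m m ℝ) := by
    calc a • (1 : Matrix m m ℝ) - A
        = (hA.eigenvectorUnitary : Matrix m m ℝ) * (a • 1)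
            * star (hA.eigenvectorUnitary : Matrix m m ℝ)
          - (hA.eigenvectorUnitary : Matrix m m ℝ)
            * Matrix.diagonal (RCLike.ofReal ∘ hA.eigenvalues)
            * star (hA.eigenvectorUnitary : Matrix m m ℝ) := by
          rw [h1, ← Unitary.conjStarAlgAut_apply (S := ℝ), ← hA.spectral_theorem]
      _ = (hA.eigenvectorUnitary : Matrix m m ℝ)
            * (a • 1 - Matrix.diagonal (RCLike.ofReal ∘ hA.eigenvalues))
            * star (hA.eigenvectorUnitary : Matrix m m ℝ) := by
          rw [Matrix.mul_sub, Matrix.sub_mul]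
  rw [key, Matrix.det_mul, Matrix.det_mul]
  have hdet1 : Matrix.det (hA.eigenvectorUnitary : Matrix m m ℝ)
      * Matrix.det (star (hA.eigenvectorUnitary : Matrix m m ℝ)) = 1 := by
    rw [← Matrix.det_mul, hU1, Matrix.det_one]
  have hmid : a • (1 : Matrix m m ℝ) - Matrix.diagonal (RCLike.ofReal ∘ hA.eigenvalues)
      = Matrix.diagonal (fun i => a - hA.eigenvalues i) := by
    ext i j
    by_cases h : i = j
    · subst h
      simp [Matrix.diagonal_apply_eq, Matrix.one_apply_eq, RCLike.ofReal_real_eq_id]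
    · simp [Matrix.diagonal_apply_ne _ h, Matrix.one_apply_ne h]
  calc Matrix.det (hA.eigenvectorUnitary : Matrix m m ℝ)
        * Matrix.det (a • 1 - Matrix.diagonal (RCLike.ofReal ∘ hA.eigenvalues))
        * Matrix.det (star (hA.eigenvectorUnitary : Matrix m m ℝ))
      = Matrix.det (a • 1 - Matrix.diagonal (RCLike.ofReal ∘ hA.eigenvalues))
        * (Matrix.det (hA.eigenvectorUnitary : Matrix m m ℝ)
          * Matrix.det (star (hA.eigenvectorUnitary : Matrix m m ℝ))) := by ring
    _ = Matrix.det (a • 1 - Matrix.diagonal (RCLike.ofReal ∘ hA.eigenvalues)) := by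
        rw [hdet1, mul_one]
    _ = ∏ i, (a - hA.eigenvalues i) := by rw [hmid, Matrix.det_diagonal]

lemma symm_idem_trace_zero {m : Type*} [Fintype m] [DecidableEq m]
    {F : Matrix m m ℝ} (hsym : Fᵀ = F) (hidem : F * F = F) (htr : F.trace = 0) : F = 0 := by
  have key : ∑ i, ∑ j, F j i * F j i = 0 := by
    have h1 : (Fᵀ * F).trace = 0 := by rw [hsym, hidem, htr]
    rw [Matrix.trace] at h1
    calc ∑ i, ∑ j, F j i * F j i = ∑ i, (Fᵀ * F).diag i := by
          refine Finset.sum_congr rfl fun i _ => ?_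
          rw [Matrix.diag_apply, Matrix.mul_apply]
          exact Finset.sum_congr rfl fun j _ => by rw [Matrix.transpose_apply]
      _ = 0 := h1
  have houter := (Finset.sum_eq_zero_iff_of_nonneg
    (fun i _ => Finset.sum_nonneg fun j _ => mul_self_nonneg (F j i))).mp key
  ext i j
  have hinner := (Finset.sum_eq_zero_iff_of_nonneg
    (fun j' (_ : j' ∈ Finset.univ) => mul_self_nonneg (F j' j))).mp
    (houter j (Finset.mem_univ j)) i (Finset.mem_univ i)
  show F i j = 0
  exact mul_self_eq_zero.mp hinner

lemma det_le_trace_pow {m : Type*} [Fintype m] [DecidableEq m]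
    {W : Matrix m m ℝ} (hW : W.PosSemidef) :
    W.det ≤ (W.trace / (Fintype.card m : ℝ)) ^ (Fintype.card m) := by
  rcases isEmpty_or_nonempty m with hm | hm
  · simp [Matrix.det_isEmpty]
  · have hN0 : 0 < Fintype.card m := Fintype.card_pos
    set N := Fintype.card m with hN
    have hdet : W.det = ∏ i, hW.1.eigenvalues i := by
      simpa using hW.1.det_eq_prod_eigenvalues
    have htr : W.trace = ∑ i, hW.1.eigenvalues i := trace_eq_sum_eigenvalues hW.1
    have hnn : ∀ i, 0 ≤ hW.1.eigenvalues i := hW.eigenvalues_nonneg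
    have hAM := Real.geom_mean_le_arith_mean_weighted Finset.univ (fun _ => 1/(N:ℝ))
        (fun i => hW.1.eigenvalues i) (fun i _ => by positivity)
        (by
          rw [Finset.sum_const, Finset.card_univ, ← hN, nsmul_eq_mul]
          field_simp)
        (fun i _ => hnn i)
    have hprod : ∏ i, hW.1.eigenvalues i
        = (∏ i, hW.1.eigenvalues i ^ ((1:ℝ)/(N:ℝ))) ^ N := by
      rw [← Finset.prod_pow]
      refine Finset.prod_congr rfl fun i _ => ?_
      rw [← Real.rpow_natCast (hW.1.eigenvalues i ^ ((1:ℝ)/(N:ℝ))) N,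
        ← Real.rpow_mul (hnn i), one_div,
        inv_mul_cancel₀ (by exact_mod_cast hN0.ne' : (N:ℝ) ≠ 0), Real.rpow_one]
    have h2 : (∑ i, (1/(N:ℝ)) * hW.1.eigenvalues i) = (∑ i, hW.1.eigenvalues i) / N := by
      rw [← Finset.mul_sum, one_div, inv_mul_eq_div]
    rw [hdet, htr, hprod, ← h2]
    exact pow_le_pow_left₀
      (Finset.prod_nonneg fun i _ => Real.rpow_nonneg (hnn i) _) hAM N

lemma proj_compress {ι κ : Type*} [Fintype ι] [DecidableEq ι] [Fintype κ] [DecidableEq κ]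
    (P : Matrix ι ι ℝ) (R : Matrix κ ι ℝ) (Li : Matrix κ κ ℝ) (c : ℝ) (hc : c ≠ 0)
    (hP : P * P = c • P) (hPt : Pᵀ = P)
    (hLi : (R * P * Rᵀ) * Li = 1) (hLi' : Li * (R * P * Rᵀ) = 1) (hLit : Liᵀ = Li)
    (htr : P.trace = c * (Fintype.card κ : ℝ)) :
    P * (Rᵀ * Li * R) * P = P := by
  set X := Rᵀ * Li * R with hX
  have hXPX : X * P * X = X := by
    have h1 : Li * ((R * P * Rᵀ) * Li) = Li := by rw [hLi, Matrix.mul_one]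
    calc X * P * X = Rᵀ * (Li * ((R * P * Rᵀ) * Li)) * R := by
          simp only [hX, Matrix.mul_assoc]
      _ = Rᵀ * Li * R := by rw [h1]
      _ = X := hX.symm
  have hEE : (P * X * P) * (P * X * P) = c • (P * X * P) := by
    have hXPXr : X * (P * (X * P)) = X * P := by
      calc X * (P * (X * P)) = (X * P * X) * P := by simp only [Matrix.mul_assoc]
        _ = X * P := by rw [hXPX]
    calc (P * X * P) * (P * X * P)
        = P * (X * (P * (P * (X * P)))) := by simp only [Matrix.mul_assoc]
      _ = P * (X * ((P * P) * (X * P))) := by rw [← Matrix.mul_assoc P P (X * P)]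
      _ = P * (X * ((c • P) * (X * P))) := by rw [hP]
      _ = c • (P * (X * (P * (X * P)))) := by
            rw [Matrix.smul_mul, Matrix.mul_smul, Matrix.mul_smul]
      _ = c • (P * (X * P)) := by rw [hXPXr]
      _ = c • (P * X * P) := by rw [← Matrix.mul_assoc]
  have hXt : Xᵀ = X := by
    rw [hX, Matrix.transpose_mul, Matrix.transpose_mul, Matrix.transpose_transpose, hLit,
      Matrix.mul_assoc]
  have hEt : (P * X * P)ᵀ = P * X * P := by
    rw [Matrix.transpose_mul, Matrix.transpose_mul, hPt, hXt, ← Matrix.mul_assoc]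
  have h2 : (P * X).trace = (Fintype.card κ : ℝ) := by
    have e1 : P * X = (P * (Rᵀ * Li)) * R := by simp only [hX, Matrix.mul_assoc]
    have e2 : R * (P * (Rᵀ * Li)) = (R * P * Rᵀ) * Li := by simp only [Matrix.mul_assoc]
    rw [e1, Matrix.trace_mul_comm, e2, hLi, Matrix.trace_one]
  have htrE : (P * X * P).trace = c * (Fintype.card κ : ℝ) := by
    calc (P * X * P).trace = (P * (P * X)).trace := Matrix.trace_mul_comm _ _
      _ = ((P * P) * X).trace := by rw [← Matrix.mul_assoc]
      _ = ((c • P) * X).trace := by rw [hP]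
      _ = c * (P * X).trace := by rw [Matrix.smul_mul, Matrix.trace_smul, smul_eq_mul]
      _ = c * (Fintype.card κ : ℝ) := by rw [h2]
  set Q := (1/c) • P with hQ
  set E := (1/c) • (P * X * P) with hE
  have hQQ : Q * Q = Q := by
    rw [hQ, Matrix.smul_mul, Matrix.mul_smul, hP, smul_smul, smul_smul]
    congr 1
    field_simp
  have hPE : P * (P * X * P) = c • (P * X * P) := by
    calc P * (P * X * P) = (P * P) * (X * P) := by simp only [Matrix.mul_assoc]
      _ = (c • P) * (X * P) := by rw [hP]
      _ = c • (P * X * P) := by rw [Matrix.smul_mul, ← Matrix.mul_assoc]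
  have hEP : (P * X * P) * P = c • (P * X * P) := by
    calc (P * X * P) * P = (P * X) * (P * P) := by simp only [Matrix.mul_assoc]
      _ = (P * X) * (c • P) := by rw [hP]
      _ = c • (P * X * P) := by rw [Matrix.mul_smul, Matrix.mul_assoc]
  have hQE : Q * E = E := by
    rw [hQ, hE, Matrix.smul_mul, Matrix.mul_smul, hPE, smul_smul, smul_smul]
    congr 1
    field_simp
  have hEQ : E * Q = E := by
    rw [hQ, hE, Matrix.smul_mul, Matrix.mul_smul, hEP, smul_smul, smul_smul]
    congr 1
    field_simp
  have hEE' : E * E = E := by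
    rw [hE, Matrix.smul_mul, Matrix.mul_smul, hEE, smul_smul, smul_smul]
    congr 1
    field_simp
  have hF : (Q - E) * (Q - E) = Q - E := by
    rw [Matrix.sub_mul, Matrix.mul_sub, Matrix.mul_sub, hQQ, hQE, hEQ, hEE']
    abel
  have hFt : (Q - E)ᵀ = Q - E := by
    rw [Matrix.transpose_sub, hQ, hE, Matrix.transpose_smul, Matrix.transpose_smul, hPt, hEt]
  have hFtr : (Q - E).trace = 0 := by
    rw [Matrix.trace_sub, hQ, hE, Matrix.trace_smul, Matrix.trace_smul, htr, htrE]
    exact sub_self _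
  have hF0 : Q - E = 0 := symm_idem_trace_zero hFt hF hFtr
  have hQE' : Q = E := sub_eq_zero.mp hF0
  have hfin := congrArg (fun (M : Matrix ι ι ℝ) => c • M) hQE'
  simp only [hQ, hE, smul_smul] at hfin
  rw [mul_one_div, div_self hc, one_smul, one_smul] at hfin
  exact hfin.symm

lemma ctr {α β : Type*} (X : Matrix α β ℝ) : Xᴴ = Xᵀ := by
  ext i j
  simp [Matrix.conjTranspose_apply]

end SUB


/-- for a ℚ-acyclic complex `T`,
`|H̃_{k−1}(T)|² ≤ ((k+1)/n)^{m₁} (k+1)^{m₂}`. -/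
theorem simple_uniform_bound (n k : ℕ) (hk : 1 ≤ k) (hn : k < n)
    (T : Finset (Face n (k+1))) (hT : T.card = (n-1).choose k)
    (hdet : detSq (colSub (bdryHat n k) T) ≠ 0) :
    detSq (colSub (bdryHat n k) T)
      ≤ (((k : ℝ) + 1) / (n : ℝ)) ^ ((n-2).choose (k-1)) *
          ((k : ℝ) + 1) ^ ((n-2).choose k) := by
  classical
  have hn2 : 2 ≤ n := by omega
  have hn0 : (0:ℝ) < (n:ℝ) := by exact_mod_cast (by omega : 0 < n)
  obtain ⟨k', rfl⟩ : ∃ k', k = k' + 1 := ⟨k - 1, by omega⟩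
  by_cases h : Nonempty (HFace n (k'+1) ≃ {τ // τ ∈ T})
  swap
  · exfalso; apply hdet; unfold detSq; rw [dif_neg h]
  unfold detSq
  rw [dif_pos h]
  set e := h.some with he
  set A : Matrix (HFace n (k'+1)) (HFace n (k'+1)) ℝ :=
    (colSub (bdryHat n (k'+1)) T).submatrix id e with hA
  set Bd : Matrix (Face n (k'+1)) (Face n (k'+1+1)) ℝ := bdry n (k'+1) with hBd
  set P : Matrix (Face n (k'+1)) (Face n (k'+1)) ℝ := Bd * Bdᵀ with hP
  set Bh := bdryHat n (k'+1) with hBh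
  set L : Matrix (HFace n (k'+1)) (HFace n (k'+1)) ℝ := Bh * Bhᵀ with hL
  have hBhR : Bh = SUB.Rm n (k'+1) * bdry n (k'+1) := SUB.bdryHat_eq _
  have hLRPR : L = SUB.Rm n (k'+1) * P * (SUB.Rm n (k'+1))ᵀ := by
    rw [hL, hP, hBd, hBhR]
    simp only [Matrix.transpose_mul, Matrix.mul_assoc]
  have hud1 := SUB.up_down (n := n) k'
  have hud2 := SUB.up_down (n := n) (k'+1)
  have hcomp := SUB.comp (n := n) (k'+1)
  set M : Matrix (HFace n (k'+1)) (HFace n (k'+1)) ℝ :=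
    SUB.Rm n (k'+1) * ((bdry n k')ᵀ * bdry n k') * (SUB.Rm n (k'+1))ᵀ with hM
  have hLM : L = (n:ℝ) • 1 - M := by
    have hBB : bdry n (k'+1) * (bdry n (k'+1))ᵀ
        = (n:ℝ) • 1 - (bdry n k')ᵀ * bdry n k' := eq_sub_of_add_eq hud1
    calc L = SUB.Rm n (k'+1) * (bdry n (k'+1) * (bdry n (k'+1))ᵀ) * (SUB.Rm n (k'+1))ᵀ := by
          rw [hLRPR, hP, hBd]
      _ = SUB.Rm n (k'+1) * ((n:ℝ) • 1 - (bdry n k')ᵀ * bdry n k') * (SUB.Rm n (k'+1))ᵀ := by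
          rw [hBB]
      _ = (n:ℝ) • (SUB.Rm n (k'+1) * (SUB.Rm n (k'+1))ᵀ) - M := by
          rw [Matrix.mul_sub, Matrix.sub_mul, Matrix.mul_smul, Matrix.mul_one, Matrix.smul_mul,
            hM]
      _ = (n:ℝ) • 1 - M := by rw [SUB.Rm_mul_Rmt]
  have hMsq : M * M = ((n:ℝ) - 1) • M := SUB.Msq (n := n) k' hn2
  have hMt : Mᵀ = M := by
    rw [hM]
    simp only [Matrix.transpose_mul, Matrix.transpose_transpose, Matrix.mul_assoc]
  have hMherm : M.IsHermitian := by
    show Mᴴ = M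
    rw [SUB.ctr]; exact hMt
  have htrM : M.trace = ((n:ℝ) - 1) * ((n-2).choose k' : ℝ) := by
    have hdiag : ∀ s : HFace n (k'+1), M s s = ((k'+1:ℕ) : ℝ) := by
      intro s
      rw [hM, SUB.mul_Rmt_apply, SUB.Rm_mul_apply, Matrix.mul_apply]
      have hsd := SUB.sum_sq_down (j := k') (⟨s.1, s.2.1⟩ : Face n (k'+1))
      rw [← hsd]
      exact Finset.sum_congr rfl fun ρ _ => by rw [Matrix.transpose_apply]
    rw [Matrix.trace]
    simp only [Matrix.diag_apply]
    rw [Finset.sum_congr rfl (fun s (_ : s ∈ Finset.univ) => hdiag s), Finset.sum_const,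
      Finset.card_univ, SUB.card_hface, nsmul_eq_mul]
    have hnat : (n-1).choose (k'+1) * (k'+1) = (n-1) * (n-2).choose k' := by
      have hh := SUB.choose_id2 (n-1) k' (by omega)
      rwa [show n-1-1 = n-2 by omega] at hh
    rw [← Nat.cast_mul, hnat, Nat.cast_mul, Nat.cast_sub (by omega : 1 ≤ n), Nat.cast_one]
  have hdetL : L.det = (n:ℝ) ^ ((n-2).choose (k'+1)) := by
    have hμ : ∀ i, hMherm.eigenvalues i = 0 ∨ hMherm.eigenvalues i = (n:ℝ) - 1 :=
      fun i => SUB.eigenvalues_zero_or hMherm hMsq i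
    have hdetshift : L.det = ∏ i, ((n:ℝ) - hMherm.eigenvalues i) := by
      rw [hLM]; exact SUB.det_smul_one_sub hMherm (n:ℝ)
    have htrsum : ∑ i, hMherm.eigenvalues i = ((n:ℝ)-1) * ((n-2).choose k' : ℝ) := by
      rw [← SUB.trace_eq_sum_eigenvalues hMherm, htrM]
    set t := (Finset.univ.filter (fun i : HFace n (k'+1) =>
      hMherm.eigenvalues i = (n:ℝ)-1)).card with ht
    have hsum2 : ∑ i, hMherm.eigenvalues i = ((n:ℝ)-1) * t := by
      rw [← Finset.sum_filter_add_sum_filter_not Finset.univ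
        (fun i => hMherm.eigenvalues i = (n:ℝ)-1)]
      have h1 : ∑ i ∈ Finset.univ.filter (fun i => hMherm.eigenvalues i = (n:ℝ)-1),
          hMherm.eigenvalues i = ((n:ℝ)-1) * t := by
        rw [Finset.sum_congr rfl (fun i hi => (Finset.mem_filter.mp hi).2), Finset.sum_const,
          nsmul_eq_mul, mul_comm]
      have h2 : ∑ i ∈ Finset.univ.filter (fun i => ¬ hMherm.eigenvalues i = (n:ℝ)-1),
          hMherm.eigenvalues i = 0 :=
        Finset.sum_eq_zero fun i hi => (hμ i).resolve_right (Finset.mem_filter.mp hi).2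
      rw [h1, h2, add_zero]
    have hne1 : (n:ℝ) - 1 ≠ 0 := by
      have h3 : (2:ℝ) ≤ (n:ℝ) := by exact_mod_cast hn2
      linarith
    have ht_eq : t = (n-2).choose k' := by
      have h4 : ((n:ℝ)-1) * (t:ℝ) = ((n:ℝ)-1) * ((n-2).choose k' : ℝ) := by
        rw [← hsum2, htrsum]
      exact_mod_cast mul_left_cancel₀ hne1 h4
    rw [hdetshift, ← Finset.prod_filter_mul_prod_filter_not Finset.univ
      (fun i => hMherm.eigenvalues i = (n:ℝ)-1)]
    have hp1 : ∏ i ∈ Finset.univ.filter (fun i => hMherm.eigenvalues i = (n:ℝ)-1),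
        ((n:ℝ) - hMherm.eigenvalues i) = 1 := by
      refine Finset.prod_eq_one fun i hi => ?_
      rw [(Finset.mem_filter.mp hi).2]; ring
    have hp2 : ∏ i ∈ Finset.univ.filter (fun i => ¬ hMherm.eigenvalues i = (n:ℝ)-1),
        ((n:ℝ) - hMherm.eigenvalues i)
        = (n:ℝ) ^ ((Finset.univ.filter (fun i : HFace n (k'+1) =>
            ¬ hMherm.eigenvalues i = (n:ℝ)-1)).card) := by
      refine (Finset.prod_congr rfl fun i hi => ?_).trans (Finset.prod_const _)
      rw [(hμ i).resolve_right (Finset.mem_filter.mp hi).2, sub_zero]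
    have hcard2 : (Finset.univ.filter (fun i : HFace n (k'+1) =>
        ¬ hMherm.eigenvalues i = (n:ℝ)-1)).card = (n-2).choose (k'+1) := by
      have hcc := Finset.card_filter_add_card_filter_not
        (s := (Finset.univ : Finset (HFace n (k'+1))))
        (p := fun i : HFace n (k'+1) => hMherm.eigenvalues i = (n:ℝ)-1)
      have huniv : (Finset.univ : Finset (HFace n (k'+1))).card = (n-1).choose (k'+1) := by
        rw [Finset.card_univ, SUB.card_hface]
      have hpascal : (n-1).choose (k'+1) = (n-2).choose k' + (n-2).choose (k'+1) := by
        rw [show n-1 = (n-2)+1 by omega]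
        exact Nat.choose_succ_succ (n-2) k'
      omega
    rw [hp1, hp2, hcard2, one_mul]
  have hdetLpos : 0 < L.det := by rw [hdetL]; exact pow_pos hn0 _
  have hdetLne : L.det ≠ 0 := ne_of_gt hdetLpos
  have hLunit : IsUnit L.det := isUnit_iff_ne_zero.mpr hdetLne
  have hLinv1 : L * L⁻¹ = 1 := Matrix.mul_nonsing_inv L hLunit
  have hLinv2 : L⁻¹ * L = 1 := Matrix.nonsing_inv_mul L hLunit
  have hLt : Lᵀ = L := by
    rw [hL, Matrix.transpose_mul, Matrix.transpose_transpose]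
  have hLit : (L⁻¹)ᵀ = L⁻¹ := by rw [Matrix.transpose_nonsing_inv, hLt]
  have hLPSD : L.PosSemidef := by
    have hps := Matrix.posSemidef_self_mul_conjTranspose Bh
    rwa [SUB.ctr] at hps
  have hLiPSD : (L⁻¹).PosSemidef := by
    have h1 := hLPSD.conjTranspose_mul_mul_same L⁻¹
    have h2 : (L⁻¹)ᴴ * L * L⁻¹ = L⁻¹ := by
      rw [Matrix.mul_assoc, hLinv1, Matrix.mul_one, SUB.ctr, hLit]
    rwa [h2] at h1
  have hPt : Pᵀ = P := by rw [hP, Matrix.transpose_mul, Matrix.transpose_transpose]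
  have hBdtBd : Bdᵀ * Bd = (n:ℝ) • 1 - bdry n (k'+1+1) * (bdry n (k'+1+1))ᵀ := by
    rw [hBd]
    exact eq_sub_of_add_eq' hud2
  have hf4 : P * Bd = (n:ℝ) • Bd := by
    calc P * Bd = Bd * (Bdᵀ * Bd) := by rw [hP, Matrix.mul_assoc]
      _ = Bd * ((n:ℝ) • 1 - bdry n (k'+1+1) * (bdry n (k'+1+1))ᵀ) := by rw [hBdtBd]
      _ = (n:ℝ) • Bd - (Bd * bdry n (k'+1+1)) * (bdry n (k'+1+1))ᵀ := by
          rw [Matrix.mul_sub, Matrix.mul_smul, Matrix.mul_one, Matrix.mul_assoc]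
      _ = (n:ℝ) • Bd := by
          rw [hBd, hcomp, Matrix.zero_mul, sub_zero]
  have hPP : P * P = (n:ℝ) • P := by
    calc P * P = (P * Bd) * Bdᵀ := by rw [hP]; simp only [Matrix.mul_assoc]
      _ = (n:ℝ) • (Bd * Bdᵀ) := by rw [hf4, Matrix.smul_mul]
      _ = (n:ℝ) • P := by rw [← hP]
  have hf4t : Bdᵀ * P = (n:ℝ) • Bdᵀ := by
    have h5 := congrArg Matrix.transpose hf4
    rwa [Matrix.transpose_mul, hPt, Matrix.transpose_smul] at h5
  have htrP : P.trace = (n:ℝ) * (Fintype.card (HFace n (k'+1)) : ℝ) := by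
    have hdiagP : ∀ σ : Face n (k'+1), P σ σ = ((n - (k'+1) : ℕ) : ℝ) := by
      intro σ
      rw [hP, Matrix.mul_apply]
      have hsu := SUB.sum_sq_up (j := k'+1) n (le_refl n) σ (fun a _ => a.2)
      rw [← hsu]
      refine Finset.sum_congr rfl fun τ _ => ?_
      rw [Matrix.transpose_apply, if_pos (fun (a : Fin n) _ => a.2), one_mul, hBd]
    rw [Matrix.trace]
    simp only [Matrix.diag_apply]
    rw [Finset.sum_congr rfl (fun σ (_ : σ ∈ Finset.univ) => hdiagP σ),
      Finset.sum_const, Finset.card_univ, SUB.card_face, nsmul_eq_mul, SUB.card_hface]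
    have hnat : n.choose (k'+1) * (n - (k'+1)) = n * (n-1).choose (k'+1) := by
      have hh := SUB.choose_id1 n (k'+1) (by omega)
      rw [mul_comm]
      exact hh
    rw [← Nat.cast_mul, hnat, Nat.cast_mul]
  have hRPR : SUB.Rm n (k'+1) * P * (SUB.Rm n (k'+1))ᵀ = L := hLRPR.symm
  set X : Matrix (Face n (k'+1)) (Face n (k'+1)) ℝ :=
    (SUB.Rm n (k'+1))ᵀ * L⁻¹ * SUB.Rm n (k'+1) with hXdef
  have hpc : P * X * P = P := by
    rw [hXdef]
    exact SUB.proj_compress P (SUB.Rm n (k'+1)) L⁻¹ (n:ℝ) (ne_of_gt hn0) hPP hPt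
      (by rw [hRPR]; exact hLinv1) (by rw [hRPR]; exact hLinv2) hLit htrP
  have hstep : ((n:ℝ) * n) • (Bdᵀ * X * Bd) = (n:ℝ) • (Bdᵀ * Bd) := by
    calc ((n:ℝ) * n) • (Bdᵀ * X * Bd)
        = ((n:ℝ) • Bdᵀ) * X * ((n:ℝ) • Bd) := by
          rw [Matrix.smul_mul, Matrix.smul_mul, Matrix.mul_smul, smul_smul]
      _ = (Bdᵀ * P) * X * (P * Bd) := by rw [hf4, hf4t]
      _ = Bdᵀ * (P * X * P) * Bd := by simp only [Matrix.mul_assoc]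
      _ = Bdᵀ * P * Bd := by rw [hpc]
      _ = (n:ℝ) • (Bdᵀ * Bd) := by rw [Matrix.mul_assoc, hf4, Matrix.mul_smul]
  have hG : Bdᵀ * X * Bd = ((1:ℝ)/n) • (Bdᵀ * Bd) := by
    have hinj : ((n:ℝ)*n) ≠ 0 := ne_of_gt (mul_pos hn0 hn0)
    have h5 := congrArg (fun (Z : Matrix (Face n (k'+1+1)) (Face n (k'+1+1)) ℝ)
      => (((n:ℝ)*n)⁻¹) • Z) hstep
    simp only [smul_smul] at h5
    rw [inv_mul_cancel₀ hinj, one_smul] at h5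
    rw [h5]
    congr 1
    field_simp
  set W : Matrix (HFace n (k'+1)) (HFace n (k'+1)) ℝ := Aᵀ * L⁻¹ * A with hW
  have hWG : ∀ s s' : HFace n (k'+1), W s s' = (Bhᵀ * L⁻¹ * Bh) ((e s).1) ((e s').1) :=
    fun s s' => rfl
  have hBhX : Bhᵀ * L⁻¹ * Bh = Bdᵀ * X * Bd := by
    rw [hBhR, hXdef, hBd, Matrix.transpose_mul]
    simp only [Matrix.mul_assoc]
  have hdiagG : ∀ τ : Face n (k'+1+1), (Bdᵀ * Bd) τ τ = ((k'+1+1 : ℕ) : ℝ) := by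
    intro τ
    rw [Matrix.mul_apply]
    have hsd := SUB.sum_sq_down (j := k'+1) τ
    rw [← hsd, hBd]
    exact Finset.sum_congr rfl fun σ _ => by rw [Matrix.transpose_apply]
  have htrW : W.trace
      = (Fintype.card (HFace n (k'+1)) : ℝ) * (((1:ℝ)/n) * ((k'+1+1:ℕ):ℝ)) := by
    have hds : ∀ s : HFace n (k'+1), W s s = ((1:ℝ)/n) * ((k'+1+1:ℕ):ℝ) := by
      intro s
      rw [hWG s s, hBhX, hG, Matrix.smul_apply, hdiagG, smul_eq_mul]
    rw [Matrix.trace]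
    simp only [Matrix.diag_apply]
    rw [Finset.sum_congr rfl (fun s (_ : s ∈ Finset.univ) => hds s),
      Finset.sum_const, Finset.card_univ, nsmul_eq_mul]
  have hWPSD : W.PosSemidef := by
    have h1 := hLiPSD.conjTranspose_mul_mul_same A
    rwa [SUB.ctr] at h1
  have hAMGM := SUB.det_le_trace_pow hWPSD
  have hcardS : Fintype.card (HFace n (k'+1)) = (n-1).choose (k'+1) := SUB.card_hface _
  have hcardSpos : 0 < Fintype.card (HFace n (k'+1)) := by
    rw [hcardS]; exact Nat.choose_pos (by omega)
  have hc0 : (Fintype.card (HFace n (k'+1)) : ℝ) ≠ 0 := by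
    exact_mod_cast hcardSpos.ne'
  have htrdiv : W.trace / (Fintype.card (HFace n (k'+1)) : ℝ)
      = ((1:ℝ)/n) * ((k'+1+1:ℕ):ℝ) := by
    rw [htrW, mul_comm, mul_div_assoc, div_self hc0, mul_one]
  have hdetW : W.det = A.det ^ 2 / L.det := by
    rw [hW, Matrix.det_mul, Matrix.det_mul, Matrix.det_transpose, Matrix.det_nonsing_inv,
      Ring.inverse_eq_inv']
    ring
  have hkey : A.det ^ 2 = L.det * W.det := by
    rw [hdetW]
    field_simp
  have hpascal : (n-1).choose (k'+1) = (n-2).choose k' + (n-2).choose (k'+1) := by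
    rw [show n-1 = (n-2)+1 by omega]
    exact Nat.choose_succ_succ (n-2) k'
  calc A.det ^ 2 = L.det * W.det := hkey
    _ ≤ L.det * ((W.trace / (Fintype.card (HFace n (k'+1)) : ℝ))
          ^ (Fintype.card (HFace n (k'+1)))) :=
        mul_le_mul_of_nonneg_left hAMGM (le_of_lt hdetLpos)
    _ = (n:ℝ) ^ ((n-2).choose (k'+1))
          * (((1:ℝ)/n) * ((k'+1+1:ℕ):ℝ)) ^ ((n-1).choose (k'+1)) := by
        rw [hdetL, htrdiv, hcardS]
    _ = (((k'+1 : ℝ) + 1) / (n : ℝ)) ^ ((n-2).choose k')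
          * ((k'+1 : ℝ) + 1) ^ ((n-2).choose (k'+1)) := by
        have hc : ((k'+1+1:ℕ):ℝ) = (k'+1 : ℝ) + 1 := by push_cast; ring
        rw [hc, hpascal, pow_add]
        have h6 : ((1:ℝ)/n) * ((k'+1 : ℝ) + 1) = ((k'+1 : ℝ) + 1) / n := by ring
        rw [h6]
        have h7 : (n:ℝ) ^ ((n-2).choose (k'+1))
              * ((((k'+1 : ℝ) + 1) / n) ^ ((n-2).choose k')
                * ((((k'+1 : ℝ) + 1) / n)) ^ ((n-2).choose (k'+1)))
            = (((k'+1 : ℝ) + 1) / n) ^ ((n-2).choose k')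
              * (((n:ℝ) * ((((k'+1 : ℝ) + 1)) / n)) ^ ((n-2).choose (k'+1))) := by
          rw [mul_pow]
          ring
        rw [h7, mul_comm (n:ℝ) _, div_mul_cancel₀ _ (ne_of_gt hn0)]
    _ = ((((k'+1 : ℕ) : ℝ) + 1) / (n : ℝ)) ^ ((n-2).choose (k'+1-1))
          * ((((k'+1 : ℕ) : ℝ) + 1) ^ ((n-2).choose (k'+1))) := by
        rw [Nat.add_sub_cancel]
        push_cast
        ring
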